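/- Let p, q, r be positive integers. The abelian group ℤ²/⟨(p,0),(0,q),(r,r)⟩ is isomorphic to C_e × C_f where e = lcm(gcd(p,q), gcd(q,r), gcd(p,r)) and f = gcd(p,q,r). -/

import Mathlib

noncomputable section


private lemma gcd_lcm_distrib (x y z : ℕ) (hx : x ≠ 0) (hy : y ≠ 0) (hz : z ≠ 0) :
    Nat.gcd x (Nat.lcm y z) = Nat.lcm (Nat.gcd x y) (Nat.gcd x z) := by
  have h1 : Nat.lcm y z ≠ 0 := Nat.lcm_ne_zero hy hz
  have h2 : Nat.gcd x y ≠ 0 := fun h => hx (Nat.eq_zero_of_gcd_eq_zero_left h)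
  have h3 : Nat.gcd x z ≠ 0 := fun h => hx (Nat.eq_zero_of_gcd_eq_zero_left h)
  apply Nat.eq_of_factorization_eq
  · exact fun h => hx (Nat.eq_zero_of_gcd_eq_zero_left h)
  · exact Nat.lcm_ne_zero h2 h3
  intro pp
  rw [Nat.factorization_gcd hx h1, Nat.factorization_lcm h2 h3,
    Nat.factorization_lcm hy hz, Nat.factorization_gcd hx hy, Nat.factorization_gcd hx hz,
    Finsupp.inf_apply, Finsupp.sup_apply, Finsupp.sup_apply, Finsupp.inf_apply,
    Finsupp.inf_apply]
  exact min_max_distrib_left ..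

private lemma arith2 {p q r : ℕ} (hp : p ≠ 0) (hq : q ≠ 0) (hr : r ≠ 0) :
    Nat.lcm (Nat.gcd p (Nat.lcm q r)) (Nat.gcd q (Nat.lcm p r)) =
    Nat.lcm (Nat.gcd p q) (Nat.lcm (Nat.gcd q r) (Nat.gcd p r)) := by
  rw [gcd_lcm_distrib p q r hp hq hr, gcd_lcm_distrib q p r hq hp hr]
  apply Nat.dvd_antisymm
  · apply Nat.lcm_dvd
    · exact Nat.lcm_dvd (Nat.dvd_lcm_left _ _)
        ((Nat.dvd_lcm_right _ _).trans (Nat.dvd_lcm_right _ _))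
    · apply Nat.lcm_dvd
      · rw [Nat.gcd_comm]; exact Nat.dvd_lcm_left _ _
      · exact (Nat.dvd_lcm_left _ _).trans (Nat.dvd_lcm_right _ _)
  · apply Nat.lcm_dvd
    · exact (Nat.dvd_lcm_left _ _).trans (Nat.dvd_lcm_left _ _)
    · apply Nat.lcm_dvd
      · exact (Nat.dvd_lcm_right _ _).trans (Nat.dvd_lcm_right _ _)
      · exact (Nat.dvd_lcm_right _ _).trans (Nat.dvd_lcm_left _ _)

private lemma arith3 {p q r : ℕ} (hp : p ≠ 0) (hq : q ≠ 0) (hr : r ≠ 0) :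
    Nat.lcm (Nat.gcd p q) (Nat.lcm (Nat.gcd q r) (Nat.gcd p r)) * Nat.gcd p (Nat.gcd q r) *
      Nat.lcm (p / Nat.gcd p r) (q / Nat.gcd q r) = p * q := by
  set g := Nat.gcd p q with hg
  set l := Nat.lcm p q with hl
  set G := Nat.gcd l r with hG
  set gp := Nat.gcd p r with hgp
  set gq := Nat.gcd q r with hgq
  set u := p / gp with hu
  set v := q / gq with hv
  have hgpu : gp * u = p := Nat.mul_div_cancel' (Nat.gcd_dvd_left p r)
  have hgqv : gq * v = q := Nat.mul_div_cancel' (Nat.gcd_dvd_left q r)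
  have hbc : Nat.lcm gq gp = G := by
    rw [hG, Nat.gcd_comm l r, hl, Nat.lcm_comm p q, gcd_lcm_distrib r q p hr hq hp,
      Nat.gcd_comm r q, Nat.gcd_comm r p]
  have h2 : Nat.gcd g l = g :=
    Nat.gcd_eq_left (dvd_trans (Nat.gcd_dvd_left p q) (Nat.dvd_lcm_left p q))
  have h1 : Nat.gcd g r = Nat.gcd p gq := by rw [hgq, hg, Nat.gcd_assoc]
  have hf : Nat.gcd p gq = Nat.gcd g G := by
    rw [hG, ← Nat.gcd_assoc g l r, h2, h1]
  have hgl : g * l = p * q := Nat.gcd_mul_lcm p q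
  have hgr : g * r = Nat.gcd (p*r) (q*r) := by rw [hg, ← Nat.gcd_mul_right]
  have s4 : g * G = Nat.gcd (p*q) (Nat.gcd (p*r) (q*r)) := by
    have h3 : g * G = Nat.gcd (g * l) (g * r) := by rw [hG, Nat.gcd_mul_left]
    rw [h3, hgl, hgr]
  have s5 : gp * gq * Nat.gcd u v = Nat.gcd (p*q) (Nat.gcd (p*r) (q*r)) := by
    have e0 : gp * gq * Nat.gcd u v = Nat.gcd (gp * gq * u) (gp * gq * v) :=
      (Nat.gcd_mul_left _ _ _).symm
    have e1 : gp * gq * u = gq * p := by rw [← hgpu]; ring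
    have e2 : gp * gq * v = gp * q := by rw [← hgqv]; ring
    have e3 : gq * p = Nat.gcd (p*q) (p*r) := by
      rw [mul_comm, hgq]; exact (Nat.gcd_mul_left p q r).symm
    have e4 : gp * q = Nat.gcd (q*p) (q*r) := by
      rw [mul_comm, hgp]; exact (Nat.gcd_mul_left q p r).symm
    rw [mul_comm q p] at e4
    rw [e0, e1, e2, e3, e4]
    apply Nat.dvd_antisymm
    · refine Nat.dvd_gcd ((Nat.gcd_dvd_left _ _).trans (Nat.gcd_dvd_left _ _)) (Nat.dvd_gcd
        ((Nat.gcd_dvd_left _ _).trans (Nat.gcd_dvd_right _ _))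
        ((Nat.gcd_dvd_right _ _).trans (Nat.gcd_dvd_right _ _)))
    · refine Nat.dvd_gcd (Nat.dvd_gcd (Nat.gcd_dvd_left _ _)
        ((Nat.gcd_dvd_right _ _).trans (Nat.gcd_dvd_left _ _)))
        (Nat.dvd_gcd (Nat.gcd_dvd_left _ _)
        ((Nat.gcd_dvd_right _ _).trans (Nat.gcd_dvd_right _ _)))
  calc Nat.lcm g (Nat.lcm gq gp) * Nat.gcd p gq * Nat.lcm u v
      = Nat.lcm g G * Nat.gcd g G * Nat.lcm u v := by rw [hbc, hf]
    _ = g * G * Nat.lcm u v := by rw [mul_comm (Nat.lcm g G), Nat.gcd_mul_lcm]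
    _ = gp * gq * Nat.gcd u v * Nat.lcm u v := by rw [s4, ← s5]
    _ = gp * gq * (Nat.gcd u v * Nat.lcm u v) := by ring
    _ = gp * gq * (u * v) := by rw [Nat.gcd_mul_lcm]
    _ = (gp * u) * (gq * v) := by ring
    _ = p * q := by rw [hgpu, hgqv]


def spanPair (m n : ℕ) : Submodule ℤ (ℤ × ℤ) :=
  Submodule.span ℤ ({((m:ℤ), (0:ℤ)), ((0:ℤ), (n:ℤ))} : Set (ℤ×ℤ))

lemma mem_spanPair (m n : ℕ) (x y : ℤ) :
    (x, y) ∈ spanPair m n ↔ (m:ℤ) ∣ x ∧ (n:ℤ) ∣ y := by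
  rw [spanPair, Submodule.mem_span_pair]
  constructor
  · rintro ⟨a, b, h⟩
    rw [Prod.ext_iff] at h
    simp only [Prod.fst_add, Prod.smul_fst, Prod.snd_add, Prod.smul_snd, smul_eq_mul,
      mul_zero, add_zero, zero_add] at h
    exact ⟨⟨a, by rw [← h.1]; ring⟩, ⟨b, by rw [← h.2]; ring⟩⟩
  · rintro ⟨⟨a, rfl⟩, ⟨b, rfl⟩⟩
    exact ⟨a, b, by simp [Prod.ext_iff, mul_comm]⟩

def pairHom (m n : ℕ) : (ℤ × ℤ) →+ ZMod m × ZMod n :=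
  (Int.castAddHom (ZMod m)).prodMap (Int.castAddHom (ZMod n))

lemma pairHom_ker (m n : ℕ) : (pairHom m n).ker = (spanPair m n).toAddSubgroup := by
  ext ⟨x, y⟩
  rw [AddMonoidHom.mem_ker, Submodule.mem_toAddSubgroup, mem_spanPair]
  have : (pairHom m n) (x, y) = ((x : ZMod m), (y : ZMod n)) := rfl
  rw [this, Prod.mk_eq_zero, ZMod.intCast_zmod_eq_zero_iff_dvd, ZMod.intCast_zmod_eq_zero_iff_dvd]

lemma pairHom_surj (m n : ℕ) : Function.Surjective (pairHom m n) := by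
  rintro ⟨x, y⟩
  obtain ⟨a, rfl⟩ := ZMod.intCast_surjective x
  obtain ⟨b, rfl⟩ := ZMod.intCast_surjective y
  exact ⟨(a, b), rfl⟩

def quotSpanPairEquiv (m n : ℕ) :
    ((ℤ × ℤ) ⧸ spanPair m n) ≃+ ZMod m × ZMod n :=
  ((QuotientAddGroup.quotientAddEquivOfEq (pairHom_ker m n).symm :
      (ℤ×ℤ) ⧸ (spanPair m n).toAddSubgroup ≃+ (ℤ×ℤ) ⧸ (pairHom m n).ker) :
    ((ℤ × ℤ) ⧸ spanPair m n) ≃+ (ℤ×ℤ) ⧸ (pairHom m n).ker).trans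
    (QuotientAddGroup.quotientKerEquivOfSurjective _ (pairHom_surj m n))

lemma quotSpanPairEquiv_mk (m n : ℕ) (x y : ℤ) :
    quotSpanPairEquiv m n (Submodule.Quotient.mk (x, y)) = ((x : ZMod m), (y : ZMod n)) := rfl


/-- explicit automorphism of ℤ² with parameter k -/
def psiEquiv (k : ℤ) : (ℤ × ℤ) ≃ₗ[ℤ] (ℤ × ℤ) :=
  LinearEquiv.ofLinear
    { toFun := fun z => (z.1 + z.2, -k * z.1 + (1 - k) * z.2)
      map_add' := by
        rintro ⟨a, b⟩ ⟨c, d⟩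
        simp only [Prod.mk_add_mk, Prod.mk.injEq]
        constructor <;> ring
      map_smul' := by
        rintro c ⟨a, b⟩
        simp only [Prod.smul_mk, smul_eq_mul, RingHom.id_apply, Prod.mk.injEq]
        constructor <;> ring }
    { toFun := fun w => ((1 - k) * w.1 - w.2, k * w.1 + w.2)
      map_add' := by
        rintro ⟨a, b⟩ ⟨c, d⟩
        simp only [Prod.mk_add_mk, Prod.mk.injEq]
        constructor <;> ring
      map_smul' := by
        rintro c ⟨a, b⟩
        simp only [Prod.smul_mk, smul_eq_mul, RingHom.id_apply, Prod.mk.injEq]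
        constructor <;> ring }
    (LinearMap.ext fun z => by
      rcases z with ⟨a, b⟩
      simp only [LinearMap.coe_comp, LinearMap.coe_mk, AddHom.coe_mk, Function.comp_apply,
        LinearMap.id_coe, id_eq, Prod.mk.injEq]
      constructor <;> ring)
    (LinearMap.ext fun z => by
      rcases z with ⟨a, b⟩
      simp only [LinearMap.coe_comp, LinearMap.coe_mk, AddHom.coe_mk, Function.comp_apply,
        LinearMap.id_coe, id_eq, Prod.mk.injEq]
      constructor <;> ring)

lemma lgg (m n : ℕ) (hm : m ≠ 0) (hn : n ≠ 0) :
    Nonempty ((ZMod m × ZMod n) ≃+ (ZMod (Nat.lcm m n) × ZMod (Nat.gcd m n))) := by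
  set g := Nat.gcd m n with hgdef
  set l := Nat.lcm m n with hldef
  have hg0 : g ≠ 0 := Nat.gcd_ne_zero_left hm
  have hgdvdm : (g:ℤ) ∣ (m:ℤ) := Int.natCast_dvd_natCast.mpr (Nat.gcd_dvd_left m n)
  have hgdvdn : (g:ℤ) ∣ (n:ℤ) := Int.natCast_dvd_natCast.mpr (Nat.gcd_dvd_right m n)
  set x := Int.gcdA m n with hx
  set y := Int.gcdB m n with hy
  have hB : (g:ℤ) = m * x + n * y := by
    have := Int.gcd_eq_gcd_ab (m:ℤ) (n:ℤ)
    rwa [Int.gcd_natCast_natCast] at this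
  set m' := (m:ℤ) / g with hm'
  set n' := (n:ℤ) / g with hn'
  have hgm' : (g:ℤ) * m' = m := Int.mul_ediv_cancel' hgdvdm
  have hgn' : (g:ℤ) * n' = n := Int.mul_ediv_cancel' hgdvdn
  have hone : 1 = x * m' + y * n' := by
    have hgz : (g:ℤ) ≠ 0 := Int.natCast_ne_zero.mpr hg0
    apply mul_left_cancel₀ hgz
    calc (g:ℤ) * 1 = g := mul_one _
      _ = m * x + n * y := hB
      _ = (g * m') * x + (g * n') * y := by rw [hgm', hgn']
      _ = g * (x * m' + y * n') := by ring
  have hgl : (g:ℤ) * l = m * n := by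
    have := Nat.gcd_mul_lcm m n
    exact_mod_cast congrArg (Nat.cast : ℕ → ℤ) this
  have hlm' : (l:ℤ) = m' * n := by
    have hgz : (g:ℤ) ≠ 0 := Int.natCast_ne_zero.mpr hg0
    apply mul_left_cancel₀ hgz
    rw [hgl, ← hgm']; ring
  have hlmn' : (l:ℤ) = m * n' := by
    have hgz : (g:ℤ) ≠ 0 := Int.natCast_ne_zero.mpr hg0
    apply mul_left_cancel₀ hgz
    rw [hgl, ← hgn']; ring
  set k := y * n' with hk
  have h1k : 1 - k = x * m' := by rw [hone]; ring
  have hmap : Submodule.map (psiEquiv k : (ℤ × ℤ) →ₗ[ℤ] (ℤ × ℤ)) (spanPair m n) = spanPair g l := by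
    apply le_antisymm
    · rw [spanPair, Submodule.map_span, Set.image_insert_eq, Set.image_singleton,
        Submodule.span_le]
      rintro z hz
      simp only [Set.mem_insert_iff, Set.mem_singleton_iff] at hz
      have e1 : (psiEquiv k) ((m:ℤ), (0:ℤ)) = ((m:ℤ), -k * m) := by
        simp [psiEquiv, LinearEquiv.ofLinear_apply]
      have e2 : (psiEquiv k) ((0:ℤ), (n:ℤ)) = ((n:ℤ), (1 - k) * n) := by
        simp [psiEquiv, LinearEquiv.ofLinear_apply]
      rcases hz with rfl | rfl
      · rw [SetLike.mem_coe, LinearEquiv.coe_coe, e1, mem_spanPair]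
        constructor
        · exact hgdvdm
        · refine ⟨-y, ?_⟩
          rw [hk, hlmn']; ring
      · rw [SetLike.mem_coe, LinearEquiv.coe_coe, e2, mem_spanPair]
        constructor
        · exact hgdvdn
        · refine ⟨x, ?_⟩
          rw [h1k, hlm']; ring
    · rw [spanPair, Submodule.span_le]
      rintro z hz
      simp only [Set.mem_insert_iff, Set.mem_singleton_iff] at hz
      rcases hz with rfl | rfl
      · refine ⟨((x * m : ℤ), (y * n : ℤ)), ?_, ?_⟩
        · rw [SetLike.mem_coe, mem_spanPair]
          exact ⟨⟨x, mul_comm _ _⟩, ⟨y, mul_comm _ _⟩⟩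
        · show ((x*m + y*n : ℤ), (-k * (x*m) + (1-k) * (y*n) : ℤ)) = _
          have c1 : (x*m + y*n : ℤ) = g := by rw [hB]; ring
          have c2 : (-k * (x*m) + (1-k) * (y*n) : ℤ) = 0 := by
            rw [h1k, hk, ← hgm', ← hgn']; ring
          rw [c1, c2]
      · refine ⟨((-l : ℤ), (l : ℤ)), ?_, ?_⟩
        · rw [SetLike.mem_coe, mem_spanPair]
          constructor
          · exact ⟨-n', by rw [hlmn']; ring⟩
          · exact ⟨m', by rw [hlm']; ring⟩
        · show ((-l + l : ℤ), (-k * (-l) + (1-k) * l : ℤ)) = _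
          simp only [Prod.mk.injEq]
          constructor <;> ring
  have E := (quotSpanPairEquiv m n).symm.trans
    (((Submodule.Quotient.equiv (spanPair m n) (spanPair g l) (psiEquiv k)
      hmap).toAddEquiv).trans ((quotSpanPairEquiv g l).trans (AddEquiv.prodComm)))
  exact ⟨E⟩

def piFinTwoAddEquiv {X : Fin 2 → Type*} [∀ i, AddZeroClass (X i)] :
    (∀ j, X j) ≃+ X 0 × X 1 :=
  { piFinTwoEquiv X with map_add' := fun _ _ => rfl }

lemma snf_quot_equiv {N : Submodule ℤ (ℤ × ℤ)} (hind : N.toAddSubgroup.index ≠ 0) :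
    ∃ m1 m2 : ℕ, m1 ≠ 0 ∧ m2 ≠ 0 ∧ m1 * m2 = N.toAddSubgroup.index ∧
      Nonempty (((ℤ × ℤ) ⧸ N) ≃+ (ZMod m1 × ZMod m2)) := by
  obtain ⟨n, snf⟩ := N.smithNormalForm (Module.Basis.finTwoProd ℤ)
  have hn : n = 2 := by
    have := snf.toAddSubgroup_index_ne_zero_iff.mp hind
    simpa using this
  subst hn
  have hcard : N.toAddSubgroup.index = (snf.a 0).natAbs * (snf.a 1).natAbs := by
    rw [snf.toAddSubgroup_index_eq_pow_mul_prod]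
    simp [Ideal.span_singleton_toAddSubgroup_eq_zmultiples, Int.index_zmultiples,
      Fin.prod_univ_two]
  rcases snf with ⟨bM, bN, f, a, hsnf⟩
  have ha : ∀ i, a i ≠ 0 := by
    intro i hi
    apply bN.ne_zero i
    have := hsnf i
    rw [hi, zero_smul] at this
    exact Subtype.ext this
  let σ : Fin 2 ≃ Fin 2 := Equiv.ofBijective f (Finite.injective_iff_bijective.mp f.injective)
  set A : Fin 2 → ℤ := fun j => a (σ.symm j) with hA
  let bN' : Module.Basis (Fin 2) ℤ N := bN.reindex σ
  have hsnf' : ∀ j, (bN' j : ℤ × ℤ) = A j • bM j := by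
    intro j
    rw [Module.Basis.reindex_apply, hsnf]
    congr 1
    exact congrArg bM (σ.apply_symm_apply j)
  have mem_iff : ∀ z : ℤ × ℤ, z ∈ N ↔ ∀ j, A j ∣ (bM.repr z) j := by
    intro z
    rw [bN'.mem_submodule_iff']
    have key : ∀ (c : Fin 2 → ℤ) (i), bM.repr (∑ j, c j • A j • bM j) i = A i * c i := by
      intro c i
      simp_rw [← mul_smul]
      rw [show (∑ j, (c j * A j) • bM j) = ∑ j, ((fun x => c x * A x) j) • bM j from rfl,
        congrFun (bM.repr_sum_self fun x => c x * A x) i]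
      ring
    constructor
    · rintro ⟨c, rfl⟩ i
      refine ⟨c i, ?_⟩
      simp_rw [hsnf']
      exact key c i
    · intro h
      choose c hc using h
      refine ⟨c, ?_⟩
      simp_rw [hsnf']
      apply bM.ext_elem
      intro i
      rw [key c i, hc i, mul_comm]
  set I : Submodule ℤ (Fin 2 → ℤ) := Submodule.pi Set.univ (fun j => Ideal.span {A j}) with hI
  have hmap : Submodule.map (bM.equivFun : (ℤ × ℤ) →ₗ[ℤ] (Fin 2 → ℤ)) N = I := by
    ext zv
    simp only [hI, Submodule.mem_map, Submodule.mem_pi, Set.mem_univ, forall_true_left,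
      Ideal.mem_span_singleton, LinearEquiv.coe_coe, Module.Basis.equivFun_apply, true_implies]
    constructor
    · rintro ⟨w, hw, rfl⟩ j
      exact (mem_iff w).mp hw j
    · intro h
      refine ⟨∑ j, zv j • bM j, ?_, ?_⟩
      · rw [mem_iff]
        intro j
        rw [congrFun (bM.repr_sum_self zv) j]
        exact h j
      · exact funext fun j => congrFun (bM.repr_sum_self zv) j
  have E1 := Submodule.Quotient.equiv N I (bM.equivFun) hmap
  have E2 := Submodule.quotientPi (fun j : Fin 2 => Ideal.span ({A j} : Set ℤ))
  have E3 := AddEquiv.piCongrRight (fun j : Fin 2 =>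
    (Int.quotientSpanEquivZMod (A j)).toAddEquiv)
  refine ⟨(A 0).natAbs, (A 1).natAbs, by simp [hA, Int.natAbs_ne_zero, ha],
    by simp [hA, Int.natAbs_ne_zero, ha], ?_, ?_⟩
  · rw [hcard]
    show (a (σ.symm 0)).natAbs * (a (σ.symm 1)).natAbs = _
    have two : ∀ i : Fin 2, i = 0 ∨ i = 1 := by decide
    have hne : σ.symm 0 ≠ σ.symm 1 := fun h => by
      have := σ.symm.injective h
      simp at this
    rcases two (σ.symm 0) with h0 | h0 <;> rcases two (σ.symm 1) with h1 | h1
    · exact absurd (h0.trans h1.symm) hne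
    · rw [h0, h1]
    · rw [h0, h1]; exact Nat.mul_comm _ _
    · exact absurd (h0.trans h1.symm) hne
  · exact ⟨E1.toAddEquiv.trans (E2.toAddEquiv.trans (E3.trans piFinTwoAddEquiv))⟩

variable {p q r : ℕ}

def tripleSpan (p q r : ℕ) : Submodule ℤ (ℤ × ℤ) :=
  Submodule.span ℤ ({((p:ℤ), (0:ℤ)), ((0:ℤ), (q:ℤ)), ((r:ℤ), (r:ℤ))} : Set (ℤ×ℤ))

lemma mem_tripleSpan {z : ℤ × ℤ} :
    z ∈ tripleSpan p q r ↔ ∃ a b c : ℤ, (a * p + c * r, b * q + c * r) = z := by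
  have comp : ∀ a b c : ℤ, a • ((p:ℤ), (0:ℤ)) + b • ((0:ℤ), (q:ℤ)) + c • ((r:ℤ), (r:ℤ))
      = (a * p + c * r, b * q + c * r) := by
    intro a b c
    simp only [Prod.smul_mk, smul_eq_mul, Prod.mk_add_mk]
    rw [Prod.mk.injEq]
    constructor <;> ring
  rw [tripleSpan]
  simp only [Submodule.mem_span_insert, Submodule.mem_span_singleton]
  constructor
  · rintro ⟨a, z1, ⟨b, z2, ⟨c, rfl⟩, rfl⟩, rfl⟩
    exact ⟨a, b, c, by rw [← comp a b c]; simp [add_assoc]⟩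
  · rintro ⟨a, b, c, rfl⟩
    exact ⟨a, b • ((0:ℤ), (q:ℤ)) + c • ((r:ℤ), (r:ℤ)), ⟨b, c • ((r:ℤ), (r:ℤ)), ⟨c, rfl⟩, rfl⟩,
      by rw [← comp a b c]; simp [add_assoc]⟩

lemma spanPair_le_tripleSpan : spanPair p q ≤ tripleSpan p q r := by
  rw [spanPair, Submodule.span_le]
  rintro z hz
  simp only [Set.mem_insert_iff, Set.mem_singleton_iff] at hz
  rw [SetLike.mem_coe, mem_tripleSpan]
  rcases hz with rfl | rfl
  · exact ⟨1, 0, 0, by simp⟩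
  · exact ⟨0, 1, 0, by simp⟩

/-- X-axis membership: forward -/
lemma axis_fst_dvd {z : ℤ} (h : (z, (0:ℤ)) ∈ tripleSpan p q r) :
    ((Nat.gcd p (Nat.lcm q r) : ℕ) : ℤ) ∣ z := by
  rw [mem_tripleSpan] at h
  obtain ⟨a, b, c, h⟩ := h
  rw [Prod.mk.injEq] at h
  obtain ⟨h1, h2⟩ := h
  have hqd : (q:ℤ) ∣ c * r := ⟨-b, by linarith⟩
  have hrd : (r:ℤ) ∣ c * r := ⟨c, mul_comm _ _⟩
  have hlcm : ((Nat.lcm q r : ℕ) : ℤ) ∣ c * r := by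
    have := Int.dvd_natAbs.mp (Int.natCast_dvd_natCast.mpr (Int.lcm_dvd (Int.dvd_natAbs.mpr hqd) (Int.dvd_natAbs.mpr hrd)))
    rwa [show Int.lcm (q:ℤ) (r:ℤ) = Nat.lcm q r from by rw [Int.lcm]; simp] at this
  have hX1 : ((Nat.gcd p (Nat.lcm q r) : ℕ) : ℤ) ∣ (p:ℤ) :=
    Int.natCast_dvd_natCast.mpr (Nat.gcd_dvd_left _ _)
  have hX2 : ((Nat.gcd p (Nat.lcm q r) : ℕ) : ℤ) ∣ ((Nat.lcm q r : ℕ) : ℤ) :=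
    Int.natCast_dvd_natCast.mpr (Nat.gcd_dvd_right _ _)
  have : ((Nat.gcd p (Nat.lcm q r) : ℕ) : ℤ) ∣ a * p + c * r :=
    dvd_add (Dvd.dvd.mul_left hX1 a) (hX2.trans hlcm)
  rwa [h1] at this

/-- X-axis membership: backward -/
lemma axis_fst_mem (hq : q ≠ 0) : (((Nat.gcd p (Nat.lcm q r) : ℕ) : ℤ), (0:ℤ)) ∈ tripleSpan p q r := by
  have hg : Nat.gcd q r ≠ 0 := Nat.gcd_ne_zero_left hq
  set g := Nat.gcd q r with hgdef
  set L := Nat.lcm q r with hLdef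
  have hqg : g * (q / g) = q := Nat.mul_div_cancel' (Nat.gcd_dvd_left q r)
  have hrg : g * (r / g) = r := Nat.mul_div_cancel' (Nat.gcd_dvd_right q r)
  have hgL : g * L = q * r := Nat.gcd_mul_lcm q r
  have hL1 : (q / g) * r = L := by
    apply Nat.eq_of_mul_eq_mul_left (Nat.pos_of_ne_zero hg)
    rw [← mul_assoc, hqg, hgL]
  have hL2 : (r / g) * q = L := by
    apply Nat.eq_of_mul_eq_mul_left (Nat.pos_of_ne_zero hg)
    rw [← mul_assoc, hrg, hgL, mul_comm (q:ℕ) r]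
  set u := Int.gcdA p L with hu
  set v := Int.gcdB p L with hv
  have hB : ((Nat.gcd p L : ℕ) : ℤ) = p * u + L * v := by
    have := Int.gcd_eq_gcd_ab (p:ℤ) (L:ℤ)
    rwa [Int.gcd_natCast_natCast] at this
  rw [mem_tripleSpan]
  refine ⟨u, -v * (r / g : ℕ), v * (q / g : ℕ), ?_⟩
  rw [Prod.mk.injEq]
  constructor
  · rw [hB]
    have : ((q / g : ℕ) : ℤ) * (r : ℤ) = (L : ℤ) := by exact_mod_cast congrArg (Nat.cast) hL1
    calc u * p + v * (q/g : ℕ) * r = u * p + v * (((q/g : ℕ):ℤ) * r) := by ring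
      _ = u * p + v * L := by rw [this]
      _ = p * u + L * v := by ring
  · have h2 : ((r / g : ℕ) : ℤ) * (q : ℤ) = (L : ℤ) := by exact_mod_cast congrArg (Nat.cast) hL2
    have h1 : ((q / g : ℕ) : ℤ) * (r : ℤ) = (L : ℤ) := by exact_mod_cast congrArg (Nat.cast) hL1
    calc -v * (r/g : ℕ) * q + v * (q/g : ℕ) * r
        = -(v * (((r/g : ℕ):ℤ) * q)) + v * (((q/g : ℕ):ℤ) * r) := by ring
      _ = 0 := by rw [h1, h2]; ring

/-- symmetric versions for the second axis -/
lemma axis_snd_dvd {z : ℤ} (h : ((0:ℤ), z) ∈ tripleSpan p q r) :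
    ((Nat.gcd q (Nat.lcm p r) : ℕ) : ℤ) ∣ z := by
  rw [mem_tripleSpan] at h
  obtain ⟨a, b, c, h⟩ := h
  rw [Prod.mk.injEq] at h
  obtain ⟨h1, h2⟩ := h
  have hpd : (p:ℤ) ∣ c * r := ⟨-a, by linarith⟩
  have hrd : (r:ℤ) ∣ c * r := ⟨c, mul_comm _ _⟩
  have hlcm : ((Nat.lcm p r : ℕ) : ℤ) ∣ c * r := by
    have := Int.dvd_natAbs.mp (Int.natCast_dvd_natCast.mpr (Int.lcm_dvd (Int.dvd_natAbs.mpr hpd) (Int.dvd_natAbs.mpr hrd)))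
    rwa [show Int.lcm (p:ℤ) (r:ℤ) = Nat.lcm p r from by rw [Int.lcm]; simp] at this
  have hX1 : ((Nat.gcd q (Nat.lcm p r) : ℕ) : ℤ) ∣ (q:ℤ) :=
    Int.natCast_dvd_natCast.mpr (Nat.gcd_dvd_left _ _)
  have hX2 : ((Nat.gcd q (Nat.lcm p r) : ℕ) : ℤ) ∣ ((Nat.lcm p r : ℕ) : ℤ) :=
    Int.natCast_dvd_natCast.mpr (Nat.gcd_dvd_right _ _)
  have : ((Nat.gcd q (Nat.lcm p r) : ℕ) : ℤ) ∣ b * q + c * r :=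
    dvd_add (Dvd.dvd.mul_left hX1 b) (hX2.trans hlcm)
  rwa [h2] at this

lemma axis_snd_mem (hp : p ≠ 0) :
    ((0:ℤ), ((Nat.gcd q (Nat.lcm p r) : ℕ) : ℤ)) ∈ tripleSpan p q r := by
  have hg : Nat.gcd p r ≠ 0 := Nat.gcd_ne_zero_left hp
  set g := Nat.gcd p r with hgdef
  set L := Nat.lcm p r with hLdef
  have hpg : g * (p / g) = p := Nat.mul_div_cancel' (Nat.gcd_dvd_left p r)
  have hrg : g * (r / g) = r := Nat.mul_div_cancel' (Nat.gcd_dvd_right p r)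
  have hgL : g * L = p * r := Nat.gcd_mul_lcm p r
  have hL1 : (p / g) * r = L := by
    apply Nat.eq_of_mul_eq_mul_left (Nat.pos_of_ne_zero hg)
    rw [← mul_assoc, hpg, hgL]
  have hL2 : (r / g) * p = L := by
    apply Nat.eq_of_mul_eq_mul_left (Nat.pos_of_ne_zero hg)
    rw [← mul_assoc, hrg, hgL, mul_comm (p:ℕ) r]
  set u := Int.gcdA q L with hu
  set v := Int.gcdB q L with hv
  have hB : ((Nat.gcd q L : ℕ) : ℤ) = q * u + L * v := by
    have := Int.gcd_eq_gcd_ab (q:ℤ) (L:ℤ)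
    rwa [Int.gcd_natCast_natCast] at this
  rw [mem_tripleSpan]
  refine ⟨-v * (r / g : ℕ), u, v * (p / g : ℕ), ?_⟩
  rw [Prod.mk.injEq]
  have h1 : ((p / g : ℕ) : ℤ) * (r : ℤ) = (L : ℤ) := by exact_mod_cast congrArg (Nat.cast) hL1
  have h2 : ((r / g : ℕ) : ℤ) * (p : ℤ) = (L : ℤ) := by exact_mod_cast congrArg (Nat.cast) hL2
  constructor
  · calc -v * (r/g : ℕ) * p + v * (p/g : ℕ) * r
        = -(v * (((r/g : ℕ):ℤ) * p)) + v * (((p/g : ℕ):ℤ) * r) := by ring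
      _ = 0 := by rw [h1, h2]; ring
  · rw [hB]
    calc u * q + v * (p/g : ℕ) * r = u * q + v * (((p/g : ℕ):ℤ) * r) := by ring
      _ = u * q + v * L := by rw [h1]
      _ = q * u + L * v := by ring

lemma exponent_eq (hp : p ≠ 0) (hq : q ≠ 0) (hr : r ≠ 0) :
    AddMonoid.exponent ((ℤ × ℤ) ⧸ tripleSpan p q r) =
      Nat.lcm (Nat.gcd p q) (Nat.lcm (Nat.gcd q r) (Nat.gcd p r)) := by
  set X := Nat.gcd p (Nat.lcm q r) with hX
  set Y := Nat.gcd q (Nat.lcm p r) with hY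
  set e := Nat.lcm (Nat.gcd p q) (Nat.lcm (Nat.gcd q r) (Nat.gcd p r)) with he
  have hXY : Nat.lcm X Y = e := arith2 hp hq hr
  have hXe : X ∣ e := hXY ▸ Nat.dvd_lcm_left X Y
  have hYe : Y ∣ e := hXY ▸ Nat.dvd_lcm_right X Y
  have keysmul : ∀ (n : ℕ) (z : ℤ × ℤ), (n • Submodule.Quotient.mk z :
      (ℤ × ℤ) ⧸ tripleSpan p q r) = Submodule.Quotient.mk (n • z) :=
    fun n z => (map_nsmul ((tripleSpan p q r).mkQ) n z).symm
  apply Nat.dvd_antisymm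
  · -- exponent ∣ e
    apply AddMonoid.exponent_dvd_of_forall_nsmul_eq_zero
    intro x
    obtain ⟨⟨z1, z2⟩, rfl⟩ := Submodule.Quotient.mk_surjective _ x
    rw [keysmul, Submodule.Quotient.mk_eq_zero]
    have hsmul : e • ((z1 : ℤ), (z2 : ℤ)) = z1 • (((e:ℕ):ℤ), (0:ℤ)) + z2 • ((0:ℤ), ((e:ℕ):ℤ)) := by
      rw [← Nat.cast_smul_eq_nsmul ℤ]
      simp only [Prod.smul_mk, smul_eq_mul, Prod.mk_add_mk, mul_zero, mul_one, add_zero, zero_add]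
      rw [Prod.mk.injEq]
      constructor <;> ring
    rw [hsmul]
    have hXmem : (((e:ℕ):ℤ), (0:ℤ)) ∈ tripleSpan p q r := by
      obtain ⟨t, ht⟩ := hXe
      have := (tripleSpan p q r).smul_mem ((t:ℕ):ℤ) (axis_fst_mem hq)
      rw [Prod.smul_mk, smul_eq_mul, smul_eq_mul, mul_zero] at this
      rwa [show ((t:ℕ):ℤ) * ((X:ℕ):ℤ) = ((e:ℕ):ℤ) from by
        rw [← Nat.cast_mul, mul_comm, ← ht]] at this
    have hYmem : ((0:ℤ), ((e:ℕ):ℤ)) ∈ tripleSpan p q r := by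
      obtain ⟨t, ht⟩ := hYe
      have := (tripleSpan p q r).smul_mem ((t:ℕ):ℤ) (axis_snd_mem hp)
      rw [Prod.smul_mk, smul_eq_mul, smul_eq_mul, mul_zero] at this
      rwa [show ((t:ℕ):ℤ) * ((Y:ℕ):ℤ) = ((e:ℕ):ℤ) from by
        rw [← Nat.cast_mul, mul_comm, ← ht]] at this
    exact (tripleSpan p q r).add_mem ((tripleSpan p q r).smul_mem z1 hXmem)
      ((tripleSpan p q r).smul_mem z2 hYmem)
  · -- e ∣ exponent
    rw [← hXY]
    apply Nat.lcm_dvd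
    · have hdvd : X ∣ addOrderOf (Submodule.Quotient.mk (p := tripleSpan p q r) ((1:ℤ), (0:ℤ))) := by
        set o := addOrderOf (Submodule.Quotient.mk (p := tripleSpan p q r) ((1:ℤ), (0:ℤ))) with ho
        have h0 : o • Submodule.Quotient.mk (p := tripleSpan p q r) ((1:ℤ), (0:ℤ)) = 0 :=
          addOrderOf_nsmul_eq_zero _
        rw [keysmul, Submodule.Quotient.mk_eq_zero] at h0
        have : o • ((1:ℤ), (0:ℤ)) = (((o:ℕ):ℤ), (0:ℤ)) := by
          rw [Prod.smul_mk]
          simp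
        rw [this] at h0
        have := axis_fst_dvd h0
        exact_mod_cast this
      exact hdvd.trans (AddMonoid.addOrder_dvd_exponent _)
    · have hdvd : Y ∣ addOrderOf (Submodule.Quotient.mk (p := tripleSpan p q r) ((0:ℤ), (1:ℤ))) := by
        set o := addOrderOf (Submodule.Quotient.mk (p := tripleSpan p q r) ((0:ℤ), (1:ℤ))) with ho
        have h0 : o • Submodule.Quotient.mk (p := tripleSpan p q r) ((0:ℤ), (1:ℤ)) = 0 :=
          addOrderOf_nsmul_eq_zero _
        rw [keysmul, Submodule.Quotient.mk_eq_zero] at h0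
        have : o • ((0:ℤ), (1:ℤ)) = ((0:ℤ), ((o:ℕ):ℤ)) := by
          rw [Prod.smul_mk]
          simp
        rw [this] at h0
        have := axis_snd_dvd h0
        exact_mod_cast this
      exact hdvd.trans (AddMonoid.addOrder_dvd_exponent _)

lemma card_identity (hp : p ≠ 0) (hq : q ≠ 0) :
    p * q = (tripleSpan p q r).toAddSubgroup.index *
      Nat.lcm (p / Nat.gcd p r) (q / Nat.gcd q r) := by
  set KH := (spanPair p q).toAddSubgroup with hKH
  set H := (tripleSpan p q r).toAddSubgroup with hH
  have hle : KH ≤ H := fun x hx => spanPair_le_tripleSpan hx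
  set vbar : (ℤ × ℤ) ⧸ KH := QuotientAddGroup.mk' KH ((r:ℤ), (r:ℤ)) with hvbar
  have hHbar : AddSubgroup.map (QuotientAddGroup.mk' KH) H = AddSubgroup.zmultiples vbar := by
    have h1 : H = AddSubgroup.closure
        ({((p:ℤ), (0:ℤ)), ((0:ℤ), (q:ℤ)), ((r:ℤ), (r:ℤ))} : Set (ℤ×ℤ)) := by
      rw [hH, tripleSpan, Submodule.span_int_eq_addSubgroupClosure]
    rw [h1, AddMonoidHom.map_closure, Set.image_insert_eq, Set.image_insert_eq,
      Set.image_singleton]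
    apply le_antisymm
    · rw [AddSubgroup.closure_le]
      rintro z hz
      simp only [Set.mem_insert_iff, Set.mem_singleton_iff] at hz
      rcases hz with rfl | rfl | rfl
      · have : QuotientAddGroup.mk' KH ((p:ℤ), (0:ℤ)) = 0 := by
          rw [QuotientAddGroup.mk'_apply, QuotientAddGroup.eq_zero_iff]
          rw [hKH, Submodule.mem_toAddSubgroup, spanPair, Submodule.mem_span_pair]
          exact ⟨1, 0, by simp⟩
        rw [this]; exact zero_mem _
      · have : QuotientAddGroup.mk' KH ((0:ℤ), (q:ℤ)) = 0 := by
          rw [QuotientAddGroup.mk'_apply, QuotientAddGroup.eq_zero_iff]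
          rw [hKH, Submodule.mem_toAddSubgroup, spanPair, Submodule.mem_span_pair]
          exact ⟨0, 1, by simp⟩
        rw [this]; exact zero_mem _
      · exact AddSubgroup.mem_zmultiples vbar
    · rw [AddSubgroup.zmultiples_eq_closure, AddSubgroup.closure_le]
      rintro z hz
      simp only [Set.mem_singleton_iff] at hz
      subst hz
      exact AddSubgroup.subset_closure (Or.inr (Or.inr rfl))
  have hcardQ2 : Nat.card ((ℤ × ℤ) ⧸ KH) = p * q := by
    have h0 : Nat.card ((ℤ × ℤ) ⧸ KH) = Nat.card (ZMod p × ZMod q) :=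
      Nat.card_congr (quotSpanPairEquiv p q).toEquiv
    rw [h0, Nat.card_prod, Nat.card_zmod, Nat.card_zmod]
  have e3 := QuotientAddGroup.quotientQuotientEquivQuotient KH H hle
  have hcardsplit := AddSubgroup.card_eq_card_quotient_mul_card_addSubgroup
    (AddSubgroup.map (QuotientAddGroup.mk' KH) H)
  have hvord : addOrderOf vbar = Nat.lcm (p / Nat.gcd p r) (q / Nat.gcd q r) := by
    have := addOrderOf_injective (quotSpanPairEquiv p q).toAddMonoidHom
      (quotSpanPairEquiv p q).injective vbar
    refine this.symm.trans ?_
    have hcoe : (quotSpanPairEquiv p q).toAddMonoidHom vbar = (quotSpanPairEquiv p q) vbar := rfl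
    rw [hcoe]
    have hval : (quotSpanPairEquiv p q) vbar = ((r : ZMod p), (r : ZMod q)) := by
      have := quotSpanPairEquiv_mk p q (r:ℤ) (r:ℤ)
      rw [hvbar]
      convert this using 2 <;> simp
      rfl
    rw [hval, Prod.addOrderOf, ZMod.addOrderOf_coe r hp, ZMod.addOrderOf_coe r hq]
  have hQcard : Nat.card (((ℤ × ℤ) ⧸ KH) ⧸ AddSubgroup.map (QuotientAddGroup.mk' KH) H)
      = H.index := by
    rw [Nat.card_congr e3.toEquiv]
    rfl
  have hsub : Nat.card (AddSubgroup.map (QuotientAddGroup.mk' KH) H)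
      = Nat.lcm (p / Nat.gcd p r) (q / Nat.gcd q r) := by
    rw [hHbar, Nat.card_zmultiples, hvord]
  rw [hcardQ2, hQcard, hsub] at hcardsplit
  exact hcardsplit

lemma zmod_exponent (m : ℕ) (hm : m ≠ 0) : AddMonoid.exponent (ZMod m) = m := by
  apply Nat.dvd_antisymm
  · apply AddMonoid.exponent_dvd_of_forall_nsmul_eq_zero
    intro x
    rw [nsmul_eq_mul, ZMod.natCast_self, zero_mul]
  · have h := AddMonoid.addOrder_dvd_exponent (1 : ZMod m)
    rwa [ZMod.addOrderOf_one] at h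

theorem stmt_9 (p q r : ℕ) (hp : 0 < p) (hq : 0 < q) (hr : 0 < r) :
    Nonempty (((ℤ × ℤ) ⧸ AddSubgroup.closure
        {((p : ℤ), (0 : ℤ)), ((0 : ℤ), (q : ℤ)), ((r : ℤ), (r : ℤ))}) ≃+
      (ZMod (Nat.lcm (Nat.gcd p q) (Nat.lcm (Nat.gcd q r) (Nat.gcd p r))) ×
        ZMod (Nat.gcd p (Nat.gcd q r)))) := by
  have hp0 : p ≠ 0 := hp.ne'
  have hq0 : q ≠ 0 := hq.ne'
  have hr0 : r ≠ 0 := hr.ne'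
  set e := Nat.lcm (Nat.gcd p q) (Nat.lcm (Nat.gcd q r) (Nat.gcd p r)) with he
  set f := Nat.gcd p (Nat.gcd q r) with hf
  set L := Nat.lcm (p / Nat.gcd p r) (q / Nat.gcd q r) with hL
  have hLne : L ≠ 0 := by
    apply Nat.lcm_ne_zero
    · exact (Nat.div_pos (Nat.le_of_dvd hp (Nat.gcd_dvd_left p r))
        (Nat.pos_of_ne_zero (Nat.gcd_ne_zero_left hp0))).ne'
    · exact (Nat.div_pos (Nat.le_of_dvd hq (Nat.gcd_dvd_left q r))
        (Nat.pos_of_ne_zero (Nat.gcd_ne_zero_left hq0))).ne' 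
  have hcard := card_identity (r := r) hp0 hq0
  have hind : (tripleSpan p q r).toAddSubgroup.index ≠ 0 := by
    intro h0
    rw [h0, zero_mul] at hcard
    exact Nat.mul_ne_zero hp0 hq0 hcard
  obtain ⟨m1, m2, hm1, hm2, hmm, ⟨E⟩⟩ := snf_quot_equiv hind
  -- identify invariants
  have hef_card : e * f = (tripleSpan p q r).toAddSubgroup.index := by
    have h3 := arith3 hp0 hq0 hr0
    have : e * f * L = (tripleSpan p q r).toAddSubgroup.index * L := by
      rw [h3, hcard]
    exact Nat.eq_of_mul_eq_mul_right (Nat.pos_of_ne_zero hLne) this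
  have hlcm : Nat.lcm m1 m2 = e := by
    have h1 : AddMonoid.exponent ((ℤ × ℤ) ⧸ tripleSpan p q r) = e := exponent_eq hp0 hq0 hr0
    have h2 : AddMonoid.exponent ((ℤ × ℤ) ⧸ tripleSpan p q r)
        = AddMonoid.exponent (ZMod m1 × ZMod m2) := AddMonoid.exponent_eq_of_addEquiv E
    rw [h2, AddMonoid.exponent_prod, zmod_exponent m1 hm1, zmod_exponent m2 hm2] at h1
    exact h1
  have hene : e ≠ 0 := by
    rw [← hlcm]
    exact Nat.lcm_ne_zero hm1 hm2
  have hgcd : Nat.gcd m1 m2 = f := by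
    have h1 : Nat.gcd m1 m2 * Nat.lcm m1 m2 = m1 * m2 := Nat.gcd_mul_lcm m1 m2
    rw [hlcm, hmm, ← hef_card] at h1
    apply Nat.eq_of_mul_eq_mul_right (Nat.pos_of_ne_zero hene)
    rw [h1]
    ring
  obtain ⟨E2⟩ := lgg m1 m2 hm1 hm2
  rw [hlcm, hgcd] at E2
  rw [show (AddSubgroup.closure {((p : ℤ), (0 : ℤ)), ((0 : ℤ), (q : ℤ)), ((r : ℤ), (r : ℤ))})
    = (tripleSpan p q r).toAddSubgroup from (Submodule.span_int_eq_addSubgroupClosure _).symm]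
  exact ⟨E.trans E2⟩


end
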